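/- Let L be a finite pure 2-dimensional simplicial complex on n vertices that is shellable. Then wsat(L^(1), K_3) = n − 1, where L^(1) is the 1-skeleton of L regarded as a simple graph. -/

import Mathlib

/-- A finite abstract simplicial complex on vertex type `V`: a finite family of
nonempty finite sets closed under taking nonempty subsets. -/
structure SComplex (V : Type*) where
  faces : Finset (Finset V)
  nonempty_mem : ∀ σ ∈ faces, σ.Nonempty
  down_closed : ∀ σ ∈ faces, ∀ τ, τ ⊆ σ → τ.Nonempty → τ ∈ faces

namespace SComplex

variable {V : Type*}

/-- A facet is an inclusion-maximal face. -/
def IsFacet (K : SComplex V) (σ : Finset V) : Prop :=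
  σ ∈ K.faces ∧ ∀ τ ∈ K.faces, σ ⊆ τ → σ = τ

/-- `K` is pure `d`-dimensional: `K` is nonempty and all facets have dimension `d`
(i.e. cardinality `d + 1`). -/
def PureDim (K : SComplex V) (d : ℕ) : Prop :=
  K.faces.Nonempty ∧ ∀ σ, K.IsFacet σ → σ.card = d + 1

/-- The 1-skeleton of a complex, regarded as a simple graph on `V`. -/
def skel1 [DecidableEq V] (K : SComplex V) : SimpleGraph V where
  Adj u v := u ≠ v ∧ ({u, v} : Finset V) ∈ K.faces
  symm := by
    refine ⟨fun u v h => ?_⟩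
    exact ⟨h.1.symm, by rw [Finset.pair_comm]; exact h.2⟩
  loopless := ⟨fun u h => h.1 rfl⟩

/-- `K` is shellable (as a pure `d`-dimensional complex): its facets can be ordered
`θ₁, …, θₘ` so that for every `i ≥ 2` the complex `K[θᵢ] ∩ K[θ₁, …, θ_{i-1}]` is pure
and `(d-1)`-dimensional, i.e. it is nonempty and all of its facets have cardinality `d`. -/
def Shellable (K : SComplex V) (d : ℕ) : Prop :=
  ∃ l : List (Finset V), l.Nodup ∧ (∀ σ, σ ∈ l ↔ K.IsFacet σ) ∧
    ∀ i : Fin l.length, 1 ≤ i.val →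
      ((∃ σ : Finset V, σ.Nonempty ∧ σ ⊆ l.get i ∧
          ∃ j : Fin l.length, j < i ∧ σ ⊆ l.get j) ∧
       ∀ σ : Finset V,
         (σ.Nonempty ∧ σ ⊆ l.get i ∧ ∃ j : Fin l.length, j < i ∧ σ ⊆ l.get j) →
         (∀ τ : Finset V,
            (τ.Nonempty ∧ τ ⊆ l.get i ∧ ∃ j : Fin l.length, j < i ∧ τ ⊆ l.get j) →
            σ ⊆ τ → σ = τ) →
         σ.card = d)

/-- `K'` arises from `K` by an elementary collapse: there is a face `τ` of `K` contained
in a single facet `σ` distinct from `τ`, and `K'` is obtained from `K` by removing all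
faces containing `τ`. -/
def ElemCollapse (K K' : SComplex V) : Prop :=
  ∃ τ σ : Finset V, τ ∈ K.faces ∧ K.IsFacet σ ∧ τ ≠ σ ∧ τ ⊆ σ ∧
    (∀ ρ, K.IsFacet ρ → τ ⊆ ρ → ρ = σ) ∧
    (∀ ρ, ρ ∈ K'.faces ↔ ρ ∈ K.faces ∧ ¬ τ ⊆ ρ)

/-- `K` collapses to `L` via a finite sequence of elementary collapses. -/
def CollapsesTo (K L : SComplex V) : Prop :=
  Relation.ReflTransGen ElemCollapse K L

/-- `K` is collapsible: it collapses to a complex consisting of a single vertex. -/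
def Collapsible (K : SComplex V) : Prop :=
  ∃ L : SComplex V, K.CollapsesTo L ∧ ∃ v : V, L.faces = {{v}}

/-- The reduced Euler characteristic `χ̃(K) = (Σᵢ (-1)^i fᵢ(K)) - 1`. -/
def redEuler (K : SComplex V) : ℤ :=
  (∑ σ ∈ K.faces, (-1 : ℤ) ^ (σ.card + 1)) - 1

/-- `K` is flag: every (nonempty) set of vertices of `K` that are pairwise joined by
edges of `K` is a face of `K`. -/
def Flag [DecidableEq V] (K : SComplex V) : Prop :=
  ∀ C : Finset V, C.Nonempty → (∀ a ∈ C, ({a} : Finset V) ∈ K.faces) →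
    (∀ a ∈ C, ∀ b ∈ C, a ≠ b → ({a, b} : Finset V) ∈ K.faces) → C ∈ K.faces

/-- The barycentric subdivision of `K`: vertices are the (nonempty) faces of `K`, and
faces are the nonempty collections of faces of `K` that form a chain under inclusion. -/
noncomputable def sd [DecidableEq V] (K : SComplex V) : SComplex (Finset V) := by
  classical
  exact
  { faces := K.faces.powerset.filter
      (fun C => C.Nonempty ∧ ∀ a ∈ C, ∀ b ∈ C, a ⊆ b ∨ b ⊆ a)
    nonempty_mem := fun C hC => (Finset.mem_filter.mp hC).2.1
    down_closed := by
      intro C hC D hDC hD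
      rw [Finset.mem_filter, Finset.mem_powerset] at hC ⊢
      exact ⟨hDC.trans hC.1, hD, fun a ha b hb => hC.2.2 a (hDC ha) b (hDC hb)⟩ }

end SComplex

/-- `es` is a witnessing sequence that `G` is weakly `K₃`-saturated in `F`:
`G` is a spanning subgraph of `F`, `es` is an ordering of the edges of `F` not in `G`,
and adding them one by one, each added edge completes a copy of `K₃` containing it. -/
def WitnessesWeakK3Sat {V : Type*} (F G : SimpleGraph V) (es : List (Sym2 V)) : Prop :=
  G ≤ F ∧ es.Nodup ∧ (∀ e, e ∈ es ↔ e ∈ F.edgeSet \ G.edgeSet) ∧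
    ∀ i : Fin es.length, ∃ x y z : V,
      es.get i = s(x, y) ∧
      (G ⊔ SimpleGraph.fromEdgeSet {e | e ∈ es.take (i.val + 1)}).Adj x y ∧
      (G ⊔ SimpleGraph.fromEdgeSet {e | e ∈ es.take (i.val + 1)}).Adj y z ∧
      (G ⊔ SimpleGraph.fromEdgeSet {e | e ∈ es.take (i.val + 1)}).Adj z x

/-- `G` is weakly `K₃`-saturated in `F`. -/
def WeaklyK3Saturated {V : Type*} (F G : SimpleGraph V) : Prop :=
  ∃ es : List (Sym2 V), WitnessesWeakK3Sat F G es

/-- The weak saturation number `wsat(F, K₃)`: the minimum number of edges of a graph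
weakly `K₃`-saturated in `F`. -/
noncomputable def wsatK3 (V : Type*) [Fintype V] (F : SimpleGraph V) : ℕ :=
  sInf {n | ∃ G : SimpleGraph V, WeaklyK3Saturated F G ∧ G.edgeSet.ncard = n}


namespace WsatAux
open SimpleGraph

variable {V : Type*}

lemma reach_trans {G H : SimpleGraph V}
    (h : ∀ a b, H.Adj a b → G.Reachable a b) {u v : V} (hr : H.Reachable u v) :
    G.Reachable u v := by
  obtain ⟨w⟩ := hr
  induction w with
  | nil => exact Reachable.refl _
  | cons h' _ ih => exact (h _ _ h').trans ih

lemma exists_max_pred {α : Type*} [Finite α] [PartialOrder α] {p : α → Prop} {a : α} (h : p a) :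
    ∃ b, a ≤ b ∧ p b ∧ ∀ c, p c → b ≤ c → b = c := by
  obtain ⟨b, hab, hb⟩ := Finite.exists_le_maximal h
  exact ⟨b, hab, hb.1, fun c hc hbc => le_antisymm hbc (hb.2 hc hbc)⟩

lemma sym2_cases [DecidableEq V] {θ : Finset V} {c d e : V}
    (hsub : θ ⊆ ({c, d, e} : Finset V))
    {x y : V} (hx : x ∈ θ) (hy : y ∈ θ) (hxy : x ≠ y) :
    s(x,y) = s(c,d) ∨ s(x,y) = s(c,e) ∨ s(x,y) = s(d,e) := by
  have hx' := hsub hx; have hy' := hsub hy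
  simp only [Finset.mem_insert, Finset.mem_singleton] at hx' hy'
  rcases hx' with rfl|rfl|rfl <;> rcases hy' with rfl|rfl|rfl <;>
    simp_all [Sym2.eq_iff]

lemma mem_take_get {α : Type*} {es : List α} {k : ℕ} {e : α} (he : e ∈ es.take k) :
    ∃ j : ℕ, j < k ∧ ∃ h : j < es.length, es.get ⟨j, h⟩ = e := by
  obtain ⟨j, hj, hje⟩ := List.getElem_of_mem he
  rw [List.length_take] at hj
  refine ⟨j, by omega, by omega, ?_⟩
  rw [← hje, List.getElem_take]
  rfl

lemma card_le_of_preconnected [Fintype V] [DecidableEq V] {G : SimpleGraph V}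
    (h : G.Preconnected) : Fintype.card V ≤ G.edgeSet.ncard + 1 := by
  rcases isEmpty_or_nonempty V with hV | hV
  · simp [Fintype.card_eq_zero]
  obtain ⟨r⟩ := hV
  have hstep : ∀ v : V, v ≠ r → ∃ u, G.Adj v u ∧ G.dist u r < G.dist v r := by
    intro v hv
    have hr : G.Reachable v r := h v r
    obtain ⟨p, hp⟩ := hr.exists_walk_length_eq_dist
    cases p with
    | nil =>
        have hpos := hr.pos_dist_of_ne hv
        simp at hp
        exact absurd rfl hv
    | @cons _ u _ hadj q =>
        refine ⟨u, hadj, ?_⟩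
        have h1 := G.dist_le q
        simp only [SimpleGraph.Walk.length_cons] at hp
        omega
  classical
  choose f hf1 hf2 using hstep
  set g : V → Sym2 V := fun v => if hv : v = r then s(r,r) else s(v, f v hv) with hg
  have hinj : Set.InjOn g ↑(Finset.univ.erase r) := by
    intro v hv w hw heq
    simp only [Finset.coe_erase, Set.mem_diff, Set.mem_singleton_iff, Finset.coe_univ,
      Set.mem_univ, true_and] at hv hw
    by_contra hne
    rw [hg] at heq
    simp only [dif_neg hv, dif_neg hw] at heq
    rcases Sym2.eq_iff.mp heq with ⟨h1, h2⟩ | ⟨h1, h2⟩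
    · exact hne h1
    · have a1 := hf2 v hv
      have a2 := hf2 w hw
      rw [← h1] at a2
      rw [h2] at a1
      omega
  have hmaps : ∀ v ∈ Finset.univ.erase r, g v ∈ G.edgeSet := by
    intro v hv
    have hv' : v ≠ r := (Finset.mem_erase.mp hv).1
    rw [hg]
    simp only [dif_neg hv']
    exact (hf1 v hv')
  have hle : (Finset.univ.erase r).card ≤ G.edgeSet.ncard := by
    calc (Finset.univ.erase r).card
        = (↑(Finset.univ.erase r) : Set V).ncard := (Set.ncard_coe_finset _).symm
      _ = (g '' ↑(Finset.univ.erase r)).ncard := (Set.ncard_image_of_injOn hinj).symm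
      _ ≤ G.edgeSet.ncard := Set.ncard_le_ncard
          (by rintro e ⟨v, hv, rfl⟩; exact hmaps v hv) (Set.toFinite _)
  rw [Finset.card_erase_of_mem (Finset.mem_univ r), Finset.card_univ] at hle
  have : 1 ≤ Fintype.card V := Fintype.card_pos_iff.mpr ⟨r⟩
  omega









def EkSet (l : List (Finset V)) (k : ℕ) : Set (Sym2 V) :=
  {e | ∃ j : Fin l.length, j.val < k ∧ ∃ a ∈ l.get j, ∃ b ∈ l.get j, a ≠ b ∧ e = s(a,b)}

def VkSet (l : List (Finset V)) (k : ℕ) : Set V :=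
  {x | ∃ j : Fin l.length, j.val < k ∧ x ∈ l.get j}

lemma Vk_mono (l : List (Finset V)) {k k' : ℕ} (h : k ≤ k') : VkSet l k ⊆ VkSet l k' :=
  fun _ ⟨j, hj, hx⟩ => ⟨j, lt_of_lt_of_le hj h, hx⟩

lemma Ek_mono (l : List (Finset V)) {k k' : ℕ} (h : k ≤ k') : EkSet l k ⊆ EkSet l k' :=
  fun _ ⟨j, hj, hx⟩ => ⟨j, lt_of_lt_of_le hj h, hx⟩

lemma Vk_succ (l : List (Finset V)) (k : ℕ) (hk : k < l.length) (x : V) :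
    x ∈ VkSet l (k+1) ↔ x ∈ VkSet l k ∨ x ∈ l.get ⟨k, hk⟩ := by
  constructor
  · rintro ⟨j, hj, hx⟩
    rcases Nat.lt_or_ge j.val k with h | h
    · exact Or.inl ⟨j, h, hx⟩
    · have hjk : j = ⟨k, hk⟩ := Fin.ext (show j.val = k by omega)
      exact Or.inr (hjk ▸ hx)
  · rintro (⟨j, hj, hx⟩ | hx)
    · exact ⟨j, by omega, hx⟩
    · exact ⟨⟨k, hk⟩, Nat.lt_succ_self k, hx⟩

lemma Ek_succ (l : List (Finset V)) (k : ℕ) (hk : k < l.length) (e : Sym2 V) :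
    e ∈ EkSet l (k+1) ↔ e ∈ EkSet l k ∨
      ∃ x ∈ l.get ⟨k, hk⟩, ∃ y ∈ l.get ⟨k, hk⟩, x ≠ y ∧ e = s(x,y) := by
  constructor
  · rintro ⟨j, hj, hx⟩
    rcases Nat.lt_or_ge j.val k with h | h
    · exact Or.inl ⟨j, h, hx⟩
    · have hjk : j = ⟨k, hk⟩ := Fin.ext (show j.val = k by omega)
      exact Or.inr (hjk ▸ hx)
  · rintro (⟨j, hj, hx⟩ | hx)
    · exact ⟨j, by omega, hx⟩
    · exact ⟨⟨k, hk⟩, Nat.lt_succ_self k, hx⟩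

lemma mem_Vk_of_mem_Ek {l : List (Finset V)} {k : ℕ} {x y : V}
    (h : s(x,y) ∈ EkSet l k) : x ∈ VkSet l k ∧ y ∈ VkSet l k := by
  obtain ⟨j, hj, a, ha, b, hb, hab, he⟩ := h
  rcases Sym2.eq_iff.mp he with ⟨rfl, rfl⟩ | ⟨rfl, rfl⟩
  · exact ⟨⟨j, hj, ha⟩, ⟨j, hj, hb⟩⟩
  · exact ⟨⟨j, hj, hb⟩, ⟨j, hj, ha⟩⟩

def TriProp (T : SimpleGraph V) (es : List (Sym2 V)) : Prop :=
  ∀ i : Fin es.length, ∃ x y z : V,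
    es.get i = s(x, y) ∧
    (T ⊔ SimpleGraph.fromEdgeSet {e | e ∈ es.take (i.val + 1)}).Adj x y ∧
    (T ⊔ SimpleGraph.fromEdgeSet {e | e ∈ es.take (i.val + 1)}).Adj y z ∧
    (T ⊔ SimpleGraph.fromEdgeSet {e | e ∈ es.take (i.val + 1)}).Adj z x

lemma tri_extend {T T' : SimpleGraph V} (hTT' : T ≤ T')
    {es : List (Sym2 V)} (htri : TriProp T es) {x y z : V} (hxy : x ≠ y)
    (hyz : (T' ⊔ SimpleGraph.fromEdgeSet {e | e ∈ es ++ [s(x,y)]}).Adj y z)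
    (hzx : (T' ⊔ SimpleGraph.fromEdgeSet {e | e ∈ es ++ [s(x,y)]}).Adj z x) :
    TriProp T' (es ++ [s(x,y)]) := by
  intro i
  have hlen : (es ++ [s(x,y)]).length = es.length + 1 := by simp
  by_cases hi : i.val < es.length
  · obtain ⟨a, b, c, hget, h1, h2, h3⟩ := htri ⟨i.val, hi⟩
    have htake : (es ++ [s(x,y)]).take (i.val + 1) = es.take (i.val + 1) :=
      List.take_append_of_le_length (by omega)
    have hmono : ∀ u v : V, (T ⊔ SimpleGraph.fromEdgeSet {e | e ∈ es.take (i.val + 1)}).Adj u v →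
        (T' ⊔ SimpleGraph.fromEdgeSet {e | e ∈ (es ++ [s(x,y)]).take (i.val + 1)}).Adj u v := by
      intro u v huv
      rw [htake, sup_adj] at *
      exact huv.imp (fun h => hTT' h) id
    refine ⟨a, b, c, ?_, hmono _ _ h1, hmono _ _ h2, hmono _ _ h3⟩
    rw [← hget]
    simp [List.getElem_append_left hi]
  · have hieq : i.val = es.length := by have := i.isLt; omega
    have htake : (es ++ [s(x,y)]).take (i.val + 1) = es ++ [s(x,y)] := by
      rw [hieq]; exact List.take_of_length_le (by simp)
    refine ⟨x, y, z, ?_, ?_, ?_, ?_⟩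
    · have hieq' : i = ⟨es.length, by simp⟩ := Fin.ext hieq
      rw [hieq']; simp
    · rw [htake]
      exact (SimpleGraph.sup_adj _ _ _ _).mpr (Or.inr ((SimpleGraph.fromEdgeSet_adj _).mpr ⟨by simp, hxy⟩))
    · rw [htake]; exact hyz
    · rw [htake]; exact hzx


lemma key [Fintype V] [DecidableEq V] (l : List (Finset V))
    (hget3 : ∀ i : Fin l.length, (l.get i).card = 3)
    (hsh : ∀ i : Fin l.length, 1 ≤ i.val →
      ((∃ σ : Finset V, σ.Nonempty ∧ σ ⊆ l.get i ∧
          ∃ j : Fin l.length, j < i ∧ σ ⊆ l.get j) ∧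
       ∀ σ : Finset V,
         (σ.Nonempty ∧ σ ⊆ l.get i ∧ ∃ j : Fin l.length, j < i ∧ σ ⊆ l.get j) →
         (∀ τ : Finset V,
            (τ.Nonempty ∧ τ ⊆ l.get i ∧ ∃ j : Fin l.length, j < i ∧ τ ⊆ l.get j) →
            σ ⊆ τ → σ = τ) →
         σ.card = 2))
    (k : ℕ) (hk1 : 1 ≤ k) (hk2 : k ≤ l.length) :
    ∃ (T : SimpleGraph V) (es : List (Sym2 V)),
      T.edgeSet ⊆ EkSet l k ∧
      (∀ u ∈ VkSet l k, ∀ v ∈ VkSet l k, T.Reachable u v) ∧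
      T.edgeSet.ncard + 1 ≤ (VkSet l k).ncard ∧
      es.Nodup ∧
      (∀ e, e ∈ es ↔ e ∈ EkSet l k ∧ e ∉ T.edgeSet) ∧
      TriProp T es := by
  induction k, hk1 using Nat.le_induction with
  | base =>
    have h0 : 0 < l.length := hk2
    set θ := l.get ⟨0, h0⟩ with hθdef
    obtain ⟨a, b, c, hab, hac, hbc, hθeq⟩ := Finset.card_eq_three.mp (hget3 ⟨0, h0⟩)
    rw [← hθdef] at hθeq
    have haθ : a ∈ θ := by rw [hθeq]; simp
    have hbθ : b ∈ θ := by rw [hθeq]; simp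
    have hcθ : c ∈ θ := by rw [hθeq]; simp
    set T : SimpleGraph V := SimpleGraph.fromEdgeSet {s(a,b), s(a,c)} with hT
    have hTE : T.edgeSet = {s(a,b), s(a,c)} := by
      rw [hT, SimpleGraph.edgeSet_fromEdgeSet]
      ext e
      simp only [Set.mem_diff, Set.mem_insert_iff, Set.mem_singleton_iff, Set.mem_setOf_eq]
      constructor
      · rintro ⟨h, -⟩; exact h
      · rintro (rfl | rfl)
        · exact ⟨Or.inl rfl, by simp [Sym2.mk_isDiag_iff, hab]⟩
        · exact ⟨Or.inr rfl, by simp [Sym2.mk_isDiag_iff, hac]⟩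
    have hV1 : VkSet l 1 = (θ : Set V) := by
      ext x
      constructor
      · rintro ⟨j, hj, hx⟩
        have hj0 : j = ⟨0, h0⟩ := Fin.ext (show j.val = 0 by omega)
        rw [hj0] at hx
        exact hx
      · intro hx
        exact ⟨⟨0, h0⟩, Nat.zero_lt_one, hx⟩
    have hmemE : ∀ x ∈ θ, ∀ y ∈ θ, x ≠ y → s(x,y) ∈ EkSet l 1 := by
      intro x hx y hy hxy
      exact ⟨⟨0, h0⟩, Nat.zero_lt_one, x, hx, y, hy, hxy, rfl⟩
    have hTadj_ab : T.Adj a b := by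
      rw [← SimpleGraph.mem_edgeSet, hTE]; exact Or.inl rfl
    have hTadj_ac : T.Adj a c := by
      rw [← SimpleGraph.mem_edgeSet, hTE]; exact Or.inr rfl
    refine ⟨T, [s(b,c)], ?_, ?_, ?_, List.nodup_singleton _, ?_, ?_⟩
    · -- edges in Ek
      rw [hTE]
      rintro e (rfl | rfl)
      · exact hmemE a haθ b hbθ hab
      · exact hmemE a haθ c hcθ hac
    · -- reachability
      have hre : ∀ x ∈ θ, T.Reachable a x := by
        intro x hx
        rw [hθeq] at hx
        rcases Finset.mem_insert.mp hx with rfl | hx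
        · exact SimpleGraph.Reachable.refl _
        rcases Finset.mem_insert.mp hx with rfl | hx
        · exact hTadj_ab.reachable
        · rw [Finset.mem_singleton] at hx
          subst hx
          exact hTadj_ac.reachable
      intro u hu v hv
      rw [hV1] at hu hv
      exact (hre u hu).symm.trans (hre v hv)
    · -- cardinalities
      have h1 : T.edgeSet.ncard ≤ 2 := by
        rw [hTE]
        calc ({s(a,b), s(a,c)} : Set (Sym2 V)).ncard ≤ ({s(a,c)} : Set (Sym2 V)).ncard + 1 :=
              Set.ncard_insert_le _ _
          _ ≤ 2 := by rw [Set.ncard_singleton]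
      have h2 : (VkSet l 1).ncard = 3 := by
        rw [hV1, Set.ncard_coe_finset, hθdef]
        exact hget3 _
      omega
    · -- es characterization
      intro e
      rw [List.mem_singleton]
      constructor
      · rintro rfl
        refine ⟨hmemE b hbθ c hcθ hbc, ?_⟩
        rw [hTE]
        rintro (h | h)
        · rcases Sym2.eq_iff.mp h with ⟨h1, h2⟩ | ⟨h1, h2⟩
          · exact hab h1.symm
          · exact hac h2.symm
        · rcases Sym2.eq_iff.mp h with ⟨h1, h2⟩ | ⟨h1, h2⟩
          · exact hab h1.symm
          · exact hbc h1
      · rintro ⟨⟨j, hj, x, hx, y, hy, hxy, rfl⟩, hnT⟩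
        have hj0 : j = ⟨0, h0⟩ := Fin.ext (show j.val = 0 by omega)
        rw [hj0] at hx hy
        rcases sym2_cases (le_of_eq hθeq) hx hy hxy with h | h | h
        · exact absurd (by rw [hTE, h]; exact Or.inl rfl) hnT
        · exact absurd (by rw [hTE, h]; exact Or.inr rfl) hnT
        · exact h
    · -- triangle property
      have hnil : TriProp T [] := fun i => absurd i.isLt (by simp)
      have hca : T.Adj c a := hTadj_ac.symm
      exact tri_extend le_rfl hnil hbc
        ((SimpleGraph.sup_adj _ _ _ _).mpr (Or.inl hca))
        ((SimpleGraph.sup_adj _ _ _ _).mpr (Or.inl hTadj_ab))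
  | succ k hk ih =>
    obtain ⟨T, es, hTE, hreach, hcount, hnd, hes, htri⟩ := ih (by omega)
    have hkl : k < l.length := by omega
    set i : Fin l.length := ⟨k, hkl⟩ with hidef
    set θ := l.get i with hθdef
    have hθ3 : θ.card = 3 := hget3 i
    obtain ⟨⟨σ, hσne, hσθ, hσS⟩, hmax2⟩ := hsh i hk
    have hex : ∀ ρ : Finset V,
        (ρ.Nonempty ∧ ρ ⊆ l.get i ∧ ∃ j : Fin l.length, j < i ∧ ρ ⊆ l.get j) →
        ∃ τ, ρ ⊆ τ ∧ (τ.Nonempty ∧ τ ⊆ l.get i ∧ ∃ j : Fin l.length, j < i ∧ τ ⊆ l.get j) ∧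
          τ.card = 2 := by
      intro ρ hρ
      obtain ⟨τ, hρτ, hSτ, hmaxτ⟩ := exists_max_pred
        (p := fun τ => τ.Nonempty ∧ τ ⊆ l.get i ∧ ∃ j : Fin l.length, j < i ∧ τ ⊆ l.get j) hρ
      exact ⟨τ, hρτ, hSτ, hmax2 τ hSτ (fun τ' hτ' hsub => hmaxτ τ' hτ' hsub)⟩
    obtain ⟨σ₀, hσσ₀, ⟨hne0, hσ₀θ, j₀, hj₀, hσ₀j⟩, hσ₀2⟩ := hex σ ⟨hσne, hσθ, hσS⟩
    have hj₀' : j₀.val < k := hj₀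
    obtain ⟨a, b, hab, hσ₀ab⟩ := Finset.card_eq_two.mp hσ₀2
    have hcd1 : (θ \ σ₀).card = 1 := by
      rw [Finset.card_sdiff_of_subset hσ₀θ, hθ3, hσ₀2]
    obtain ⟨c, hc⟩ := Finset.card_eq_one.mp hcd1
    have hcθ : c ∈ θ := (Finset.mem_sdiff.mp (hc ▸ Finset.mem_singleton_self c)).1
    have hcσ₀ : c ∉ σ₀ := (Finset.mem_sdiff.mp (hc ▸ Finset.mem_singleton_self c)).2
    have hθeq : θ = insert c σ₀ := by
      apply Finset.Subset.antisymm
      · intro x hx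
        by_cases hxσ : x ∈ σ₀
        · exact Finset.mem_insert_of_mem hxσ
        · have hxd : x ∈ θ \ σ₀ := Finset.mem_sdiff.mpr ⟨hx, hxσ⟩
          rw [hc, Finset.mem_singleton] at hxd
          exact hxd ▸ Finset.mem_insert_self c σ₀
      · intro x hx
        rcases Finset.mem_insert.mp hx with rfl | hx
        · exact hcθ
        · exact hσ₀θ hx
    have haσ₀ : a ∈ σ₀ := by rw [hσ₀ab]; simp
    have hbσ₀ : b ∈ σ₀ := by rw [hσ₀ab]; simp
    have haθ : a ∈ θ := hσ₀θ haσ₀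
    have hbθ : b ∈ θ := hσ₀θ hbσ₀
    have hca : c ≠ a := by rintro rfl; exact hcσ₀ haσ₀
    have hcb : c ≠ b := by rintro rfl; exact hcσ₀ hbσ₀
    have haV : a ∈ VkSet l k := ⟨j₀, hj₀', hσ₀j haσ₀⟩
    have hbV : b ∈ VkSet l k := ⟨j₀, hj₀', hσ₀j hbσ₀⟩
    have hEab : s(a,b) ∈ EkSet l k := ⟨j₀, hj₀', a, hσ₀j haσ₀, b, hσ₀j hbσ₀, hab, rfl⟩
    by_cases hcV : c ∈ VkSet l k
    · -- CASE A : c is an old vertex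
      obtain ⟨jc, hjc, hcjc⟩ := hcV
      have hjc' : jc.val < k := hjc
      obtain ⟨τ, hcτ, ⟨hτne, hτθ, jτ, hjτ, hτj⟩, hτ2⟩ := hex {c}
        ⟨Finset.singleton_nonempty c, Finset.singleton_subset_iff.mpr hcθ, jc, hjc,
          Finset.singleton_subset_iff.mpr hcjc⟩
      have hjτ' : jτ.val < k := hjτ
      have hcmem : c ∈ τ := hcτ (Finset.mem_singleton_self c)
      have hτc1 : (τ \ {c}).card = 1 := by
        rw [Finset.card_sdiff_of_subset (Finset.singleton_subset_iff.mpr hcmem), hτ2,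
          Finset.card_singleton]
      obtain ⟨d, hd⟩ := Finset.card_eq_one.mp hτc1
      have hdτ : d ∈ τ := (Finset.mem_sdiff.mp (hd ▸ Finset.mem_singleton_self d)).1
      have hdc : d ≠ c := by
        have := (Finset.mem_sdiff.mp (hd ▸ Finset.mem_singleton_self d)).2
        simpa using this
      have hdθ : d ∈ θ := hτθ hdτ
      have hdσ₀ : d ∈ σ₀ := by
        rw [hθeq] at hdθ
        rcases Finset.mem_insert.mp hdθ with rfl | h
        · exact absurd rfl hdc
        · exact h
      obtain ⟨e', he'σ₀, hde', hσ₀de⟩ : ∃ e', e' ∈ σ₀ ∧ d ≠ e' ∧ σ₀ = {d, e'} := by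
        have : d = a ∨ d = b := by rw [hσ₀ab] at hdσ₀; simpa using hdσ₀
        rcases this with hda | hdb
        · exact ⟨b, hbσ₀, by rw [hda]; exact hab, by rw [hda]; exact hσ₀ab⟩
        · refine ⟨a, haσ₀, by rw [hdb]; exact hab.symm, ?_⟩
          rw [hdb, hσ₀ab]
          exact Finset.pair_comm a b
      have he'θ : e' ∈ θ := hσ₀θ he'σ₀
      have hce' : c ≠ e' := by rintro rfl; exact hcσ₀ he'σ₀
      have hθ3set : θ ⊆ ({c, d, e'} : Finset V) := by
        rw [hθeq, hσ₀de]
      have hEdc : s(d,c) ∈ EkSet l k := ⟨jτ, hjτ', d, hτj hdτ, c, hτj hcmem, hdc, rfl⟩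
      have hEde : s(d,e') ∈ EkSet l k :=
        ⟨j₀, hj₀', d, hσ₀j hdσ₀, e', hσ₀j he'σ₀, hde', rfl⟩
      have hθV : ∀ x ∈ θ, x ∈ VkSet l k := by
        intro x hx
        have hx' := hθ3set hx
        simp only [Finset.mem_insert, Finset.mem_singleton] at hx'
        rcases hx' with rfl | rfl | rfl
        · exact ⟨jc, hjc', hcjc⟩
        · exact ⟨j₀, hj₀', hσ₀j hdσ₀⟩
        · exact ⟨j₀, hj₀', hσ₀j he'σ₀⟩
      have hVeq : VkSet l (k+1) = VkSet l k := by
        apply Set.Subset.antisymm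
        · intro x hx
          rcases (Vk_succ l k hkl x).mp hx with h | h
          · exact h
          · exact hθV x h
        · exact Vk_mono l (by omega)
      by_cases hec : s(e', c) ∈ EkSet l k
      · -- CASE A1 : all edges of θ are old
        have hEeq : EkSet l (k+1) = EkSet l k := by
          apply Set.Subset.antisymm
          · intro e he
            rcases (Ek_succ l k hkl e).mp he with h | ⟨x, hx, y, hy, hxy, rfl⟩
            · exact h
            · rcases sym2_cases hθ3set hx hy hxy with h | h | h
              · rw [h, Sym2.eq_swap]; exact hEdc
              · rw [h, Sym2.eq_swap]; exact hec
              · rw [h]; exact hEde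
          · exact Ek_mono l (by omega)
        refine ⟨T, es, ?_, ?_, ?_, hnd, ?_, htri⟩
        · rw [hEeq]; exact hTE
        · rw [hVeq]; exact hreach
        · rw [hVeq]; exact hcount
        · intro e; rw [hEeq]; exact hes e
      · -- CASE A2 : edge s(e',c) is new
        have hnotT : s(e',c) ∉ T.edgeSet := fun h => hec (hTE h)
        have he'c : e' ≠ c := fun h => hce' h.symm
        refine ⟨T, es ++ [s(e',c)], ?_, ?_, ?_, ?_, ?_, ?_⟩
        · exact fun e he => Ek_mono l (by omega) (hTE he)
        · rw [hVeq]; exact hreach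
        · rw [hVeq]; exact hcount
        · rw [List.nodup_append]
          refine ⟨hnd, List.nodup_singleton _, ?_⟩
          intro e he e2 he'
          rw [List.mem_singleton] at he'
          subst he'
          rintro rfl
          exact hec ((hes _).mp he).1
        · intro e
          rw [List.mem_append, List.mem_singleton, hes]
          constructor
          · rintro (⟨hEk, hT⟩ | rfl)
            · exact ⟨Ek_mono l (by omega) hEk, hT⟩
            · exact ⟨(Ek_succ l k hkl _).mpr (Or.inr ⟨e', he'θ, c, hcθ, he'c, rfl⟩), hnotT⟩
          · rintro ⟨hEk, hT⟩
            rcases (Ek_succ l k hkl e).mp hEk with h | ⟨x, hx, y, hy, hxy, rfl⟩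
            · exact Or.inl ⟨h, hT⟩
            · rcases sym2_cases hθ3set hx hy hxy with h | h | h
              · exact Or.inl ⟨by rw [h, Sym2.eq_swap]; exact hEdc, hT⟩
              · exact Or.inr (by rw [h]; exact Sym2.eq_swap)
              · exact Or.inl ⟨by rw [h]; exact hEde, hT⟩
        · have hpres : ∀ u v : V, u ≠ v → s(u,v) ∈ EkSet l k →
              (T ⊔ SimpleGraph.fromEdgeSet {e | e ∈ es ++ [s(e',c)]}).Adj u v := by
            intro u v huv hE
            by_cases hT : s(u,v) ∈ T.edgeSet
            · exact (SimpleGraph.sup_adj _ _ _ _).mpr (Or.inl (T.mem_edgeSet.mp hT))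
            · refine (SimpleGraph.sup_adj _ _ _ _).mpr
                (Or.inr ((SimpleGraph.fromEdgeSet_adj _).mpr ⟨?_, huv⟩))
              simp only [Set.mem_setOf_eq, List.mem_append]
              exact Or.inl ((hes _).mpr ⟨hE, hT⟩)
          exact tri_extend le_rfl htri he'c
            (hpres c d (fun h => hdc h.symm) (by rw [Sym2.eq_swap]; exact hEdc))
            (hpres d e' hde' hEde)
    · -- CASE B : c is a new vertex
      have hac : a ≠ c := fun h => hcV (h ▸ haV)
      have hbc : b ≠ c := fun h => hcV (h ▸ hbV)
      have hnpair : ∀ x : V, s(x,c) ∉ EkSet l k := fun x h => hcV (mem_Vk_of_mem_Ek h).2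
      set T' : SimpleGraph V := T ⊔ SimpleGraph.fromEdgeSet {s(a,c)} with hT'def
      have hT'E : T'.edgeSet = T.edgeSet ∪ {s(a,c)} := by
        rw [hT'def, SimpleGraph.edgeSet_sup, SimpleGraph.edgeSet_fromEdgeSet]
        congr 1
        ext e
        simp only [Set.mem_diff, Set.mem_singleton_iff, Set.mem_setOf_eq]
        constructor
        · rintro ⟨h, -⟩; exact h
        · rintro rfl
          exact ⟨rfl, by simp [Sym2.mk_isDiag_iff, hac]⟩
      have hacT' : s(a,c) ∈ T'.edgeSet := by rw [hT'E]; exact Or.inr rfl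
      have hbcT' : s(b,c) ∉ T'.edgeSet := by
        rw [hT'E]
        rintro (h | h)
        · exact hnpair b (hTE h)
        · rcases Sym2.eq_iff.mp h with ⟨h1, h2⟩ | ⟨h1, h2⟩
          · exact hab h1.symm
          · exact hbc h1
      have hθsub : θ ⊆ ({c, a, b} : Finset V) := by rw [hθeq, hσ₀ab]
      have hVeq : VkSet l (k+1) = insert c (VkSet l k) := by
        apply Set.Subset.antisymm
        · intro x hx
          rcases (Vk_succ l k hkl x).mp hx with h | h
          · exact Set.mem_insert_of_mem _ h
          · have hx' := hθsub h
            simp only [Finset.mem_insert, Finset.mem_singleton] at hx'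
            rcases hx' with rfl | rfl | rfl
            · exact Set.mem_insert _ _
            · exact Set.mem_insert_of_mem _ haV
            · exact Set.mem_insert_of_mem _ hbV
        · intro x hx
          rcases Set.mem_insert_iff.mp hx with rfl | h
          · exact ⟨i, Nat.lt_succ_self k, hcθ⟩
          · exact Vk_mono l (by omega) h
      have hT'ac : T'.Adj a c :=
        (SimpleGraph.sup_adj _ _ _ _).mpr (Or.inr ((SimpleGraph.fromEdgeSet_adj _).mpr ⟨rfl, hac⟩))
      refine ⟨T', es ++ [s(b,c)], ?_, ?_, ?_, ?_, ?_, ?_⟩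
      · rw [hT'E]
        rintro e (he | rfl)
        · exact Ek_mono l (by omega) (hTE he)
        · exact (Ek_succ l k hkl _).mpr (Or.inr ⟨a, haθ, c, hcθ, hac, rfl⟩)
      · have hx : ∀ x ∈ VkSet l (k+1), T'.Reachable x a := by
          intro x hx
          rw [hVeq] at hx
          rcases Set.mem_insert_iff.mp hx with rfl | h
          · exact hT'ac.symm.reachable
          · exact (hreach x h a haV).mono le_sup_left
        intro u hu v hv
        exact (hx u hu).trans (hx v hv).symm
      · have h1 : T'.edgeSet.ncard ≤ T.edgeSet.ncard + 1 := by
          rw [hT'E]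
          calc (T.edgeSet ∪ {s(a,c)}).ncard ≤ T.edgeSet.ncard + ({s(a,c)} : Set (Sym2 V)).ncard :=
                Set.ncard_union_le _ _
            _ = T.edgeSet.ncard + 1 := by rw [Set.ncard_singleton]
        have h2 : (VkSet l (k+1)).ncard = (VkSet l k).ncard + 1 := by
          rw [hVeq, Set.ncard_insert_of_notMem hcV (Set.toFinite _)]
        omega
      · rw [List.nodup_append]
        refine ⟨hnd, List.nodup_singleton _, ?_⟩
        intro e he e2 he'
        rw [List.mem_singleton] at he'
        subst he'
        rintro rfl
        exact hnpair b ((hes _).mp he).1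
      · intro e
        rw [List.mem_append, List.mem_singleton, hes]
        constructor
        · rintro (⟨hEk, hT⟩ | rfl)
          · refine ⟨Ek_mono l (by omega) hEk, ?_⟩
            rw [hT'E]
            rintro (h | h)
            · exact hT h
            · rw [h] at hEk
              exact hnpair a hEk
          · exact ⟨(Ek_succ l k hkl _).mpr (Or.inr ⟨b, hbθ, c, hcθ, hbc, rfl⟩), hbcT'⟩
        · rintro ⟨hEk, hT⟩
          rcases (Ek_succ l k hkl e).mp hEk with h | ⟨x, hx, y, hy, hxy, rfl⟩
          · refine Or.inl ⟨h, fun hc' => hT ?_⟩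
            rw [hT'E]
            exact Or.inl hc'
          · rcases sym2_cases hθsub hx hy hxy with h | h | h
            · exfalso
              apply hT
              rw [h, Sym2.eq_swap]
              exact hacT'
            · exact Or.inr (by rw [h]; exact Sym2.eq_swap)
            · refine Or.inl ⟨by rw [h]; exact hEab, fun hc' => hT ?_⟩
              rw [hT'E]
              exact Or.inl hc'
      · have hpres : ∀ u v : V, u ≠ v → s(u,v) ∈ EkSet l k →
            (T' ⊔ SimpleGraph.fromEdgeSet {e | e ∈ es ++ [s(b,c)]}).Adj u v := by
          intro u v huv hE
          by_cases hT : s(u,v) ∈ T.edgeSet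
          · exact (SimpleGraph.sup_adj _ _ _ _).mpr
              (Or.inl ((SimpleGraph.sup_adj _ _ _ _).mpr (Or.inl (T.mem_edgeSet.mp hT))))
          · refine (SimpleGraph.sup_adj _ _ _ _).mpr
              (Or.inr ((SimpleGraph.fromEdgeSet_adj _).mpr ⟨?_, huv⟩))
            simp only [Set.mem_setOf_eq, List.mem_append]
            exact Or.inl ((hes _).mpr ⟨hE, hT⟩)
        have hca' : (T' ⊔ SimpleGraph.fromEdgeSet {e | e ∈ es ++ [s(b,c)]}).Adj c a :=
          (SimpleGraph.sup_adj _ _ _ _).mpr (Or.inl hT'ac.symm)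
        exact tri_extend le_sup_left htri hbc hca' (hpres a b hab hEab)

lemma adj_reach_of_witness {F G : SimpleGraph V} {es : List (Sym2 V)}
    (h : WitnessesWeakK3Sat F G es) :
    ∀ k : ℕ, ∀ a b : V,
      (G ⊔ SimpleGraph.fromEdgeSet {e | e ∈ es.take k}).Adj a b → G.Reachable a b := by
  obtain ⟨hle, hnd, hmem, htri⟩ := h
  intro k
  induction k using Nat.strong_induction_on with
  | _ k ih =>
    intro a b hab
    rcases (SimpleGraph.sup_adj _ _ _ _).mp hab with h | h
    · exact h.reachable
    · obtain ⟨hmem', hne⟩ := (SimpleGraph.fromEdgeSet_adj _).mp h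
      obtain ⟨j, hjk, hjlen, hget⟩ := mem_take_get hmem'
      obtain ⟨x, y, z, hxy, h1, h2, h3⟩ := htri ⟨j, hjlen⟩
      have hred : ∀ u v : V,
          (G ⊔ SimpleGraph.fromEdgeSet {e | e ∈ es.take (j+1)}).Adj u v →
          s(u,v) ≠ es.get ⟨j, hjlen⟩ → G.Reachable u v := by
        intro u v huv hne'
        rcases (SimpleGraph.sup_adj _ _ _ _).mp huv with h' | h'
        · exact h'.reachable
        · obtain ⟨hm, hne''⟩ := (SimpleGraph.fromEdgeSet_adj _).mp h'
          rw [Set.mem_setOf_eq] at hm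
          have htakeeq : es.take (j+1) = es.take j ++ [es.get ⟨j, hjlen⟩] := by
            rw [List.take_succ, List.getElem?_eq_getElem hjlen]
            rfl
          rw [htakeeq, List.mem_append, List.mem_singleton] at hm
          rcases hm with hm | hm
          · exact ih j hjk u v
              ((SimpleGraph.sup_adj _ _ _ _).mpr
                (Or.inr ((SimpleGraph.fromEdgeSet_adj _).mpr ⟨hm, hne''⟩)))
          · exact absurd hm hne'
      have hyzr : G.Reachable y z := by
        refine hred y z h2 ?_
        rw [hxy]
        intro hcon
        rcases Sym2.eq_iff.mp hcon with ⟨-, h'⟩ | ⟨-, h'⟩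
        · exact h2.ne h'.symm
        · exact h3.ne h'
      have hzxr : G.Reachable z x := by
        refine hred z x h3 ?_
        rw [hxy]
        intro hcon
        rcases Sym2.eq_iff.mp hcon with ⟨h', -⟩ | ⟨h', -⟩
        · exact h3.ne h'
        · exact h2.ne h'.symm
      have hxyr : G.Reachable x y := hzxr.symm.trans hyzr.symm
      have heq : s(a,b) = s(x,y) := hget.symm.trans hxy
      rcases Sym2.eq_iff.mp heq with ⟨rfl, rfl⟩ | ⟨rfl, rfl⟩
      · exact hxyr
      · exact hxyr.symm

lemma reach_of_witness {F G : SimpleGraph V} {es : List (Sym2 V)}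
    (h : WitnessesWeakK3Sat F G es) {u v : V} (hr : F.Reachable u v) : G.Reachable u v := by
  refine reach_trans (H := F) ?_ hr
  intro a b hab
  by_cases hG : G.Adj a b
  · exact hG.reachable
  · have hmem : s(a,b) ∈ es := (h.2.2.1 _).mpr
      ⟨F.mem_edgeSet.mpr hab, fun hc => hG (G.mem_edgeSet.mp hc)⟩
    refine adj_reach_of_witness h es.length a b ?_
    refine (SimpleGraph.sup_adj _ _ _ _).mpr
      (Or.inr ((SimpleGraph.fromEdgeSet_adj _).mpr ⟨?_, hab.ne⟩))
    rw [Set.mem_setOf_eq, List.take_length]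
    exact hmem

lemma exists_facet [Fintype V] [DecidableEq V] (L : SComplex V) {σ : Finset V} (hσ : σ ∈ L.faces) :
    ∃ θ, L.IsFacet θ ∧ σ ⊆ θ := by
  obtain ⟨θ, hle, hθ, hmax⟩ := exists_max_pred (p := fun τ => τ ∈ L.faces) hσ
  exact ⟨θ, ⟨hθ, fun τ hτ hsub => hmax τ hτ hsub⟩, hle⟩

end WsatAux

open WsatAux in
/-- For a finite pure 2-dimensional shellable simplicial complex `L` on `n`
vertices, `wsat(L⁽¹⁾, K₃) = n - 1`. -/
theorem wsatK3_skel1_of_shellable {V : Type*} [Fintype V] [DecidableEq V]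
    (L : SComplex V) (hvert : ∀ v : V, ({v} : Finset V) ∈ L.faces)
    (hpure : L.PureDim 2) (hshell : L.Shellable 2) :
    wsatK3 V L.skel1 = Fintype.card V - 1 := by
  classical
  obtain ⟨l, hnd, hfac, hsh⟩ := hshell
  have hget3 : ∀ i : Fin l.length, (l.get i).card = 3 :=
    fun i => hpure.2 _ ((hfac _).mp (l.get_mem i))
  obtain ⟨σ₁, hσ₁⟩ := hpure.1
  obtain ⟨θ₁, hθ₁f, -⟩ := exists_facet L hσ₁
  have hl0 : 0 < l.length := List.length_pos_iff.mpr (List.ne_nil_of_mem ((hfac θ₁).mpr hθ₁f))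
  obtain ⟨T, es, hTE, hreach, hcount, hnd', hes, htri⟩ :=
    key l hget3 hsh l.length hl0 le_rfl
  have hVuniv : VkSet l l.length = Set.univ := by
    ext x
    simp only [Set.mem_univ, iff_true]
    obtain ⟨θ, hθf, hxθ⟩ := exists_facet L (hvert x)
    obtain ⟨j, hj⟩ := List.mem_iff_get.mp ((hfac θ).mpr hθf)
    exact ⟨j, j.isLt, by rw [hj]; exact hxθ (Finset.mem_singleton_self x)⟩
  have hEuniv : EkSet l l.length = L.skel1.edgeSet := by
    ext e
    constructor
    · rintro ⟨j, hj, x, hx, y, hy, hxy, rfl⟩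
      rw [SimpleGraph.mem_edgeSet]
      change x ≠ y ∧ ({x, y} : Finset V) ∈ L.faces
      refine ⟨hxy, ?_⟩
      have hface : l.get j ∈ L.faces := ((hfac _).mp (l.get_mem j)).1
      refine L.down_closed _ hface {x,y} ?_ ⟨x, by simp⟩
      intro t ht
      rcases Finset.mem_insert.mp ht with rfl | ht
      · exact hx
      · rw [Finset.mem_singleton] at ht
        exact ht ▸ hy
    · intro he
      revert he
      induction e using Sym2.ind with
      | _ x y =>
        intro he
        rw [SimpleGraph.mem_edgeSet] at he
        obtain ⟨hxy, hface⟩ := (he : x ≠ y ∧ ({x, y} : Finset V) ∈ L.faces)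
        obtain ⟨θ, hθf, hsub⟩ := exists_facet L hface
        obtain ⟨j, hj⟩ := List.mem_iff_get.mp ((hfac θ).mpr hθf)
        exact ⟨j, j.isLt, x, by rw [hj]; exact hsub (by simp), y,
          by rw [hj]; exact hsub (by simp), hxy, rfl⟩
  have hTle : T ≤ L.skel1 :=
    SimpleGraph.edgeSet_subset_edgeSet.mp (by rw [← hEuniv]; exact hTE)
  have hwit : WitnessesWeakK3Sat L.skel1 T es := by
    refine ⟨hTle, hnd', fun e => ?_, htri⟩
    rw [Set.mem_diff, ← hEuniv]
    exact hes e
  have hpre : T.Preconnected := fun u v =>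
    hreach u (by rw [hVuniv]; trivial) v (by rw [hVuniv]; trivial)
  have hskelpre : L.skel1.Preconnected := fun u v => (hpre u v).mono hTle
  have hVcard : (VkSet l l.length).ncard = Fintype.card V := by
    rw [hVuniv, Set.ncard_univ, Nat.card_eq_fintype_card]
  have hub : T.edgeSet.ncard + 1 ≤ Fintype.card V := by rw [← hVcard]; exact hcount
  have hlb := card_le_of_preconnected hpre
  have hcardT : T.edgeSet.ncard = Fintype.card V - 1 := by omega
  apply le_antisymm
  · exact Nat.sInf_le ⟨T, ⟨es, hwit⟩, hcardT⟩
  · refine le_csInf ⟨_, T, ⟨es, hwit⟩, hcardT⟩ ?_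
    rintro n ⟨G, ⟨es', hwit'⟩, rfl⟩
    have hGpre : G.Preconnected := fun u v => reach_of_witness hwit' (hskelpre u v)
    have := card_le_of_preconnected hGpre
    omega
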